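/- Let (B_t^H)_{t≥0} be a d-dimensional fractional Brownian motion with Hurst parameter H ∈ (0,1), and let b_1, …, b_m : ℝ^d → ℝ with b_j ∈ L^p(ℝ^d) for some p ≥ 1. Assume 0 < s_1 < ⋯ < s_m, and that the joint density of the increments (B_{s_1}^H, B_{s_2}^H − B_{s_1}^H, …, B_{s_m}^H − B_{s_{m-1}}^H) satisfies the Gaussian-type bound |p̃(x_1,…,x_m)| ≤ C ∏_{j=1}^m (s_j − s_{j-1})^{−dH} exp(−|x_j|²/(4(s_j − s_{j-1})^{2H})) (with s_0 = 0). Then |E[∏_{j=1}^m b_j(B_{s_j}^H)]| ≤ C_{H,d,p} ∏_{j=1}^m ‖b_j‖_{L^p} (s_j − s_{j-1})^{−Hd/p}. -/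

import Mathlib

open Real MeasureTheory

section Auxiliary

lemma sum_Iic_ite' {M : Type*} [AddCommMonoid M] {k : ℕ} (j : Fin k) (x : Fin k → M) :
    ∑ i ∈ Finset.Iic j, x i = ∑ i : Fin k, if i ≤ j then x i else 0 := by
  rw [← Finset.sum_filter]
  congr 1
  ext i; simp

lemma sum_Iic_succ_fin' {M : Type*} [AddCommMonoid M] {m : ℕ} (x : Fin (m+1) → M) (j : Fin m) :
    ∑ i ∈ Finset.Iic (j.succ), x i = x 0 + ∑ i ∈ Finset.Iic j, x i.succ := by
  rw [sum_Iic_ite', sum_Iic_ite', Fin.sum_univ_succ]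
  simp [Fin.succ_le_succ_iff, Fin.zero_le]

lemma sum_Iic_zero_fin' {M : Type*} [AddCommMonoid M] {m : ℕ} (x : Fin (m+1) → M) :
    ∑ i ∈ Finset.Iic (0 : Fin (m+1)), x i = x 0 := by
  rw [sum_Iic_ite', Fin.sum_univ_succ]
  simp [Fin.le_zero_iff, Fin.succ_ne_zero]

lemma sum_Iic_mk_zero' {M : Type*} [AddCommMonoid M] {m : ℕ} (x : Fin m → M) (h : 0 < m) :
    ∑ i ∈ Finset.Iic (⟨0, h⟩ : Fin m), x i = x ⟨0, h⟩ := by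
  have hIic : Finset.Iic (⟨0, h⟩ : Fin m) = {⟨0, h⟩} := by
    ext i
    simp only [Finset.mem_Iic, Finset.mem_singleton, Fin.le_def, Fin.ext_iff]
    omega
  rw [hIic, Finset.sum_singleton]

lemma sum_Iic_mk_succ' {M : Type*} [AddCommMonoid M] {m k : ℕ} (h : k + 1 < m)
    (x : Fin m → M) :
    ∑ i ∈ Finset.Iic (⟨k+1, h⟩ : Fin m), x i
      = (∑ i ∈ Finset.Iic (⟨k, by omega⟩ : Fin m), x i) + x ⟨k+1, h⟩ := by
  have hins : Finset.Iic (⟨k+1, h⟩ : Fin m)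
      = insert (⟨k+1, h⟩ : Fin m) (Finset.Iic (⟨k, by omega⟩ : Fin m)) := by
    ext i
    simp only [Finset.mem_Iic, Finset.mem_insert, Fin.le_def, Fin.ext_iff]
    omega
  rw [hins, Finset.sum_insert (by simp only [Finset.mem_Iic, Fin.le_def]; omega), add_comm]

variable {G : Type*} [MeasureSpace G] [AddCommGroup G] [MeasurableAdd₂ G]
  [SigmaFinite (volume : Measure G)] [(volume : Measure G).IsAddLeftInvariant]

omit [SigmaFinite (volume : Measure G)] [(volume : Measure G).IsAddLeftInvariant] in
lemma measurable_partial_sum' {m : ℕ} (j : Fin m) :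
    Measurable (fun x : Fin m → G => ∑ i ∈ Finset.Iic j, x i) :=
  Finset.measurable_sum _ (fun i _ => measurable_pi_apply i)

lemma lintegral_prod_partial_sums' : ∀ {m : ℕ} (f : Fin m → G → ENNReal),
    (∀ j, Measurable (f j)) →
    ∫⁻ x : Fin m → G, ∏ j, f j (∑ i ∈ Finset.Iic j, x i) = ∏ j, ∫⁻ y, f j y := by
  intro m
  induction m with
  | zero =>
    intro f hf
    simp [lintegral_const, volume_pi, Measure.pi_univ]
  | succ m ih =>
    intro f hf
    have hΦ : Measurable (fun x : Fin (m+1) → G => ∏ j, f j (∑ i ∈ Finset.Iic j, x i)) := by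
      apply Finset.measurable_prod
      intro j _
      exact (hf j).comp (measurable_partial_sum' j)
    have hmp := (volume_preserving_piFinSuccAbove (fun _ : Fin (m+1) => G) 0).symm
    have heq : ∀ yz : G × (Fin m → G),
        (MeasurableEquiv.piFinSuccAbove (fun _ : Fin (m+1) => G) 0).symm yz
          = (Fin.cons yz.1 yz.2 : Fin (m+1) → G) :=
      fun yz => Fin.insertNth_zero' yz.1 yz.2
    have hcons : Measurable (fun yz : G × (Fin m → G) => (Fin.cons yz.1 yz.2 : Fin (m+1) → G)) := by
      have h2 : (fun yz : G × (Fin m → G) => (Fin.cons yz.1 yz.2 : Fin (m+1) → G)) =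
          ⇑(MeasurableEquiv.piFinSuccAbove (fun _ : Fin (m+1) => G) 0).symm := by
        ext1 yz; exact (heq yz).symm
      rw [h2]
      exact (MeasurableEquiv.piFinSuccAbove (fun _ : Fin (m+1) => G) 0).symm.measurable
    have step1 : ∫⁻ x : Fin (m+1) → G, ∏ j, f j (∑ i ∈ Finset.Iic j, x i)
        = ∫⁻ yz : G × (Fin m → G),
            ∏ j, f j (∑ i ∈ Finset.Iic j, (Fin.cons yz.1 yz.2 : Fin (m+1) → G) i) := by
      rw [← hmp.lintegral_comp hΦ]
      exact lintegral_congr fun yz => by rw [heq yz]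
    rw [step1]
    have hprodform : ∀ (y : G) (z : Fin m → G),
        (∏ j, f j (∑ i ∈ Finset.Iic j, (Fin.cons y z : Fin (m+1) → G) i)) =
          f 0 y * ∏ j : Fin m, f j.succ (y + ∑ i ∈ Finset.Iic j, z i) := by
      intro y z
      rw [Fin.prod_univ_succ]
      congr 1
      · rw [sum_Iic_zero_fin', Fin.cons_zero]
      · refine Finset.prod_congr rfl fun j _ => ?_
        rw [sum_Iic_succ_fin']
        simp
    have step2 : ∫⁻ yz : G × (Fin m → G),
            ∏ j, f j (∑ i ∈ Finset.Iic j, (Fin.cons yz.1 yz.2 : Fin (m+1) → G) i)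
        = ∫⁻ y : G, ∫⁻ z : Fin m → G,
            f 0 y * ∏ j : Fin m, f j.succ (y + ∑ i ∈ Finset.Iic j, z i) := by
      rw [Measure.volume_eq_prod, MeasureTheory.lintegral_prod
        (fun yz : G × (Fin m → G) =>
          ∏ j, f j (∑ i ∈ Finset.Iic j, (Fin.cons yz.1 yz.2 : Fin (m+1) → G) i))
        ((hΦ.comp hcons).aemeasurable)]
      simp only [hprodform]
    rw [step2]
    have inner : ∀ y : G, ∫⁻ z : Fin m → G,
        f 0 y * ∏ j : Fin m, f j.succ (y + ∑ i ∈ Finset.Iic j, z i)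
          = f 0 y * ∏ j : Fin m, ∫⁻ w, f j.succ w := by
      intro y
      have hmeas : Measurable (fun z : Fin m → G =>
          ∏ j : Fin m, f j.succ (y + ∑ i ∈ Finset.Iic j, z i)) := by
        apply Finset.measurable_prod
        intro j _
        exact (hf j.succ).comp ((measurable_const_add y).comp (measurable_partial_sum' j))
      rw [lintegral_const_mul _ hmeas]
      congr 1
      have hg : ∀ j : Fin m, Measurable (fun w => f j.succ (y + w)) :=
        fun j => (hf j.succ).comp (measurable_const_add y)
      have hih := ih (fun j w => f j.succ (y + w)) hg
      rw [hih]
      exact Finset.prod_congr rfl fun j _ => lintegral_add_left_eq_self (f j.succ) y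
    simp only [inner]
    rw [lintegral_mul_const _ (hf 0), Fin.prod_univ_succ]

lemma null_preimage_partial_sum' {m : ℕ} (j : Fin m) {A : Set G}
    (hA : MeasurableSet A) (h0 : volume A = 0) :
    (volume : Measure (Fin m → G)) {x : Fin m → G | (∑ i ∈ Finset.Iic j, x i) ∈ A} = 0 := by
  classical
  set f : Fin m → G → ENNReal :=
    fun i y => if i = j then A.indicator (fun _ => 1) y else 1 with hf
  have hfm : ∀ i, Measurable (f i) := by
    intro i
    by_cases h : i = j
    · simpa [hf, h] using (measurable_const.indicator hA)
    · simp [hf, h]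
  have key := lintegral_prod_partial_sums' f hfm
  have hprod : ∀ x : Fin m → G, ∏ i, f i (∑ k ∈ Finset.Iic i, x k)
      = Set.indicator {x : Fin m → G | (∑ i ∈ Finset.Iic j, x i) ∈ A}
          (fun _ => (1 : ENNReal)) x := by
    intro x
    rw [Finset.prod_eq_single j (fun i _ hne => by simp [hf, hne]) (by simp)]
    simp only [hf, if_pos rfl]
    by_cases hx : (∑ i ∈ Finset.Iic j, x i) ∈ A
    · rw [Set.indicator_of_mem hx, Set.indicator_of_mem (by exact hx)]
    · rw [Set.indicator_of_notMem hx, Set.indicator_of_notMem (by exact hx)]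
  have hAmeas : MeasurableSet {x : Fin m → G | (∑ i ∈ Finset.Iic j, x i) ∈ A} :=
    measurable_partial_sum' j hA
  have hLHS : ∫⁻ x : Fin m → G, ∏ i, f i (∑ k ∈ Finset.Iic i, x k)
      = (volume : Measure (Fin m → G)) {x : Fin m → G | (∑ i ∈ Finset.Iic j, x i) ∈ A} := by
    simp only [hprod]
    rw [lintegral_indicator hAmeas]
    simp
  have hRHS : (∏ i, ∫⁻ y, f i y ∂(volume : Measure G)) = 0 := by
    apply Finset.prod_eq_zero (Finset.mem_univ j)
    simp only [hf, if_pos rfl]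
    rw [lintegral_indicator hA]
    simpa using h0
  rw [hLHS, hRHS] at key
  exact key

lemma lintegral_le_rpow_of_prob' {α : Type*} [MeasurableSpace α] (ν : Measure α)
    [IsProbabilityMeasure ν] {F : α → ENNReal} (hF : AEMeasurable F ν) {p : ℝ} (hp : 1 ≤ p) :
    ∫⁻ a, F a ∂ν ≤ (∫⁻ a, F a ^ p ∂ν) ^ (1/p) := by
  rcases eq_or_lt_of_le hp with h1 | h1
  · simp [← h1]
  · have hpq := Real.HolderConjugate.conjExponent h1
    have h := ENNReal.lintegral_mul_le_Lp_mul_Lq ν hpq hF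
      (aemeasurable_const (b := (1:ENNReal)))
    simpa [Pi.mul_apply, ENNReal.one_rpow, lintegral_one, measure_univ] using h

end Auxiliary

/-- `s (j-1)`, with the convention `s₀ = 0`. -/
noncomputable def prevTime {m : ℕ} (s : Fin m → ℝ) (j : Fin m) : ℝ :=
  if h : 0 < j.val then s ⟨j.val - 1, lt_of_le_of_lt (Nat.sub_le _ _) j.isLt⟩ else 0

theorem stmt_12 (H : ℝ) (d : ℕ) (p Cb : ℝ) (hH0 : 0 < H) (hH1 : H < 1) (hd : 1 ≤ d)
    (hp : 1 ≤ p) (hCb : 0 < Cb) :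
    ∃ C : ℝ, 0 < C ∧
      ∀ (m : ℕ) (_ : 0 < m)
        (Ω : Type) (_ : MeasurableSpace Ω) (μ : Measure Ω) (_ : IsProbabilityMeasure μ)
        (B : ℝ → Ω → EuclideanSpace ℝ (Fin d))
        (s : Fin m → ℝ) (b : Fin m → EuclideanSpace ℝ (Fin d) → ℝ)
        (ptilde : (Fin m → EuclideanSpace ℝ (Fin d)) → ℝ),
        StrictMono s → (∀ j, 0 < s j) →
        (∀ j, MemLp (b j) (ENNReal.ofReal p) volume) →
        -- `ptilde` is the joint density of the vector of increments of `B^H`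
        (Measurable fun ω => fun j : Fin m =>
          B (s j) ω - (if h : 0 < j.val then
            B (s ⟨j.val - 1, lt_of_le_of_lt (Nat.sub_le _ _) j.isLt⟩) ω else 0)) →
        (Measure.map (fun ω => fun j : Fin m =>
            B (s j) ω - (if h : 0 < j.val then
              B (s ⟨j.val - 1, lt_of_le_of_lt (Nat.sub_le _ _) j.isLt⟩) ω else 0)) μ =
          volume.withDensity (fun x => ENNReal.ofReal (ptilde x))) →
        -- Gaussian-type bound on the joint density
        (∀ x : Fin m → EuclideanSpace ℝ (Fin d),
          |ptilde x| ≤ Cb * ∏ j : Fin m,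
            (s j - prevTime s j) ^ (-(d : ℝ) * H) *
              Real.exp (-‖x j‖ ^ 2 / (4 * (s j - prevTime s j) ^ (2 * H)))) →
        |∫ ω, ∏ j : Fin m, b j (B (s j) ω) ∂μ| ≤
          C * ∏ j : Fin m,
            (eLpNorm (b j) (ENNReal.ofReal p) volume).toReal *
              (s j - prevTime s j) ^ (-(H * d) / p) := by
  classical
  have p0 : (0:ℝ) < p := lt_of_lt_of_le one_pos hp
  refine ⟨Cb ^ (1/p), Real.rpow_pos_of_pos hCb _, ?_⟩
  intro m hm Ω mΩ μ hμ B s b ptilde hs hspos hb hX hmap hbound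
  set X : Ω → Fin m → EuclideanSpace ℝ (Fin d) := fun ω => fun j : Fin m =>
    B (s j) ω - (if h : 0 < j.val then
      B (s ⟨j.val - 1, lt_of_le_of_lt (Nat.sub_le _ _) j.isLt⟩) ω else 0) with hXdef
  set q : ENNReal := ENNReal.ofReal p with hq
  have hq0 : q ≠ 0 := by simp [hq, ENNReal.ofReal_eq_zero]; linarith
  have hqtop : q ≠ ⊤ := ENNReal.ofReal_ne_top
  have hqto : q.toReal = p := ENNReal.toReal_ofReal p0.le
  -- positivity of gaps
  have hΔ : ∀ j : Fin m, 0 < s j - prevTime s j := by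
    intro j
    unfold prevTime
    split
    · rename_i h
      have : (⟨j.val - 1, lt_of_le_of_lt (Nat.sub_le _ _) j.isLt⟩ : Fin m) < j := by
        simp only [Fin.lt_def]
        omega
      exact sub_pos.mpr (hs this)
    · simpa using hspos j
  -- telescoping
  have hBX : ∀ (ω : Ω) (n : ℕ) (hn : n < m),
      ∑ i ∈ Finset.Iic (⟨n, hn⟩ : Fin m), X ω i = B (s ⟨n, hn⟩) ω := by
    intro ω n
    induction n with
    | zero =>
      intro hn
      rw [sum_Iic_mk_zero']
      simp [hXdef]
    | succ k ih =>
      intro hn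
      rw [sum_Iic_mk_succ' hn, ih (Nat.lt_of_succ_lt hn)]
      have hXval : X ω ⟨k+1, hn⟩
          = B (s ⟨k+1, hn⟩) ω - B (s ⟨k, by omega⟩) ω := by
        simp only [hXdef]
        rw [dif_pos (Nat.succ_pos k)]
        congr 1
      rw [hXval]
      abel
  have hBX' : ∀ (ω : Ω) (j : Fin m), ∑ i ∈ Finset.Iic j, X ω i = B (s j) ω := by
    intro ω j
    have := hBX ω j.val j.isLt
    simpa using this
  -- measurable representatives
  set g : Fin m → EuclideanSpace ℝ (Fin d) → ℝ := fun j => ((hb j).aestronglyMeasurable).mk (b j) with hg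
  have hgmeas : ∀ j, Measurable (g j) :=
    fun j => ((hb j).aestronglyMeasurable).measurable_mk
  have hgae : ∀ j, b j =ᵐ[volume] g j := fun j => ((hb j).aestronglyMeasurable).ae_eq_mk
  -- density bound constant
  set Mr : ℝ := Cb * ∏ j : Fin m, (s j - prevTime s j) ^ (-(d : ℝ) * H) with hMrdef
  have hMr0 : 0 < Mr := by
    apply mul_pos hCb
    exact Finset.prod_pos fun j _ => Real.rpow_pos_of_pos (hΔ j) _
  have hρle : ∀ x : Fin m → EuclideanSpace ℝ (Fin d), ENNReal.ofReal (ptilde x) ≤ ENNReal.ofReal Mr := by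
    intro x
    apply ENNReal.ofReal_le_ofReal
    refine (le_abs_self _).trans ((hbound x).trans ?_)
    rw [hMrdef]
    apply mul_le_mul_of_nonneg_left _ hCb.le
    apply Finset.prod_le_prod
    · intro j _
      exact mul_nonneg (Real.rpow_pos_of_pos (hΔ j) _).le (Real.exp_nonneg _)
    · intro j _
      apply mul_le_of_le_one_right (Real.rpow_pos_of_pos (hΔ j) _).le
      rw [Real.exp_le_one_iff]
      apply div_nonpos_of_nonpos_of_nonneg
      · exact neg_nonpos.mpr (sq_nonneg _)
      · exact (mul_pos (by norm_num : (0:ℝ) < 4)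
          (Real.rpow_pos_of_pos (hΔ j) _)).le
  -- the law of increments
  have hνprob : IsProbabilityMeasure (Measure.map X μ) :=
    Measure.isProbabilityMeasure_map hX.aemeasurable
  have hν_le : Measure.map X μ ≤ (ENNReal.ofReal Mr) • (volume : Measure (Fin m → EuclideanSpace ℝ (Fin d))) := by
    rw [hmap]
    refine Measure.le_iff.2 fun T hT => ?_
    rw [withDensity_apply _ hT]
    calc ∫⁻ x in T, ENNReal.ofReal (ptilde x) ∂volume
        ≤ ∫⁻ _ in T, ENNReal.ofReal Mr ∂volume := lintegral_mono fun x => hρle x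
      _ = ENNReal.ofReal Mr * volume T := by rw [setLIntegral_const]
      _ = ((ENNReal.ofReal Mr) • (volume : Measure (Fin m → EuclideanSpace ℝ (Fin d)))) T := by
          simp [Measure.smul_apply, smul_eq_mul]
  -- a.e. replacement of b by g
  have hae_eq : ∀ᵐ ω ∂μ, ∏ j : Fin m, b j (B (s j) ω) = ∏ j : Fin m, g j (B (s j) ω) := by
    have hjae : ∀ j : Fin m, ∀ᵐ ω ∂μ, b j (B (s j) ω) = g j (B (s j) ω) := by
      intro j
      set N : Set (EuclideanSpace ℝ (Fin d)) := toMeasurable volume {x | b j x ≠ g j x} with hN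
      have hNmeas : MeasurableSet N := measurableSet_toMeasurable _ _
      have hN0 : volume N = 0 := by
        rw [hN, measure_toMeasurable]
        exact ae_iff.mp (hgae j)
      have hpre : (volume : Measure (Fin m → EuclideanSpace ℝ (Fin d)))
          {x : Fin m → EuclideanSpace ℝ (Fin d) | (∑ i ∈ Finset.Iic j, x i) ∈ N} = 0 :=
        null_preimage_partial_sum' j hNmeas hN0
      have hμ0 : μ {ω | B (s j) ω ∈ N} = 0 := by
        have hmapap := Measure.map_apply (μ := μ) hX (measurable_partial_sum' j hNmeas)
        have hsets : X ⁻¹' ((fun x : Fin m → EuclideanSpace ℝ (Fin d) =>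
            ∑ i ∈ Finset.Iic j, x i) ⁻¹' N) = {ω | B (s j) ω ∈ N} := by
          ext ω
          simp only [Set.mem_preimage, Set.mem_setOf_eq, hBX' ω j]
        rw [hsets] at hmapap
        rw [← hmapap]
        refine le_antisymm ?_ (by positivity)
        calc (Measure.map X μ) ((fun x : Fin m → EuclideanSpace ℝ (Fin d) =>
                ∑ i ∈ Finset.Iic j, x i) ⁻¹' N)
            ≤ ((ENNReal.ofReal Mr) • (volume : Measure (Fin m → EuclideanSpace ℝ (Fin d))))
                ((fun x : Fin m → EuclideanSpace ℝ (Fin d) =>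
                ∑ i ∈ Finset.Iic j, x i) ⁻¹' N) :=
              Measure.le_iff.1 hν_le _ (measurable_partial_sum' j hNmeas)
          _ = 0 := by
              rw [Measure.smul_apply]
              have : (volume : Measure (Fin m → EuclideanSpace ℝ (Fin d)))
                  ((fun x : Fin m → EuclideanSpace ℝ (Fin d) =>
                    ∑ i ∈ Finset.Iic j, x i) ⁻¹' N) = 0 := hpre
              rw [this]
              simp
      have : ∀ᵐ ω ∂μ, B (s j) ω ∉ N := by
        rw [ae_iff]
        simpa using hμ0
      filter_upwards [this] with ω hω
      by_contra hne
      exact hω (subset_toMeasurable _ _ hne)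
    have hall := (MeasureTheory.ae_all_iff).2 hjae
    filter_upwards [hall] with ω hω
    exact Finset.prod_congr rfl fun j _ => hω j
  -- lintegral-level function
  set F : (Fin m → EuclideanSpace ℝ (Fin d)) → ENNReal :=
    fun x => ∏ j : Fin m, (‖g j (∑ i ∈ Finset.Iic j, x i)‖₊ : ENNReal) with hF
  have hFmeas : Measurable F := by
    apply Finset.measurable_prod
    intro j _
    exact (measurable_coe_nnreal_ennreal.comp (hgmeas j).nnnorm).comp
      (measurable_partial_sum' j)
  have hFpmeas : Measurable fun x => F x ^ p := hFmeas.pow_const _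
  -- key chain of inequalities in ℝ≥0∞
  have step_map : ∫⁻ ω, F (X ω) ∂μ = ∫⁻ x, F x ∂(Measure.map X μ) :=
    (lintegral_map hFmeas hX).symm
  have step_holder : ∫⁻ x, F x ∂(Measure.map X μ)
      ≤ (∫⁻ x, F x ^ p ∂(Measure.map X μ)) ^ (1/p) :=
    lintegral_le_rpow_of_prob' _ hFmeas.aemeasurable hp
  have step_dens : ∫⁻ x, F x ^ p ∂(Measure.map X μ)
      ≤ ENNReal.ofReal Mr * ∫⁻ x, F x ^ p ∂(volume : Measure (Fin m → EuclideanSpace ℝ (Fin d))) := by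
    calc ∫⁻ x, F x ^ p ∂(Measure.map X μ)
        ≤ ∫⁻ x, F x ^ p ∂((ENNReal.ofReal Mr) • (volume : Measure (Fin m → EuclideanSpace ℝ (Fin d)))) :=
          lintegral_mono' hν_le le_rfl
      _ = ENNReal.ofReal Mr * ∫⁻ x, F x ^ p ∂(volume : Measure (Fin m → EuclideanSpace ℝ (Fin d))) :=
          lintegral_smul_measure _ _
  have step_prod : ∫⁻ x, F x ^ p ∂(volume : Measure (Fin m → EuclideanSpace ℝ (Fin d)))
      = ∏ j : Fin m, ∫⁻ y, ((‖g j y‖₊ : ENNReal)) ^ p ∂(volume : Measure (EuclideanSpace ℝ (Fin d))) := by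
    have : ∀ x : Fin m → EuclideanSpace ℝ (Fin d), F x ^ p
        = ∏ j : Fin m, ((‖g j (∑ i ∈ Finset.Iic j, x i)‖₊ : ENNReal)) ^ p := by
      intro x
      rw [hF]
      exact (ENNReal.prod_rpow_of_nonneg p0.le).symm
    simp only [this]
    exact lintegral_prod_partial_sums' _
      (fun j => ((measurable_coe_nnreal_ennreal.comp (hgmeas j).nnnorm)).pow_const _)
  have step_norm : ∀ j : Fin m, ∫⁻ y, ((‖g j y‖₊ : ENNReal)) ^ p ∂(volume : Measure (EuclideanSpace ℝ (Fin d)))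
      = (eLpNorm (b j) q volume) ^ p := by
    intro j
    rw [eLpNorm_congr_ae (hgae j)]
    rw [eLpNorm_eq_lintegral_rpow_enorm_toReal hq0 hqtop, hqto]
    rw [← ENNReal.rpow_mul, one_div, inv_mul_cancel₀ (ne_of_gt p0), ENNReal.rpow_one]
    rfl
  -- finiteness
  have hbfin : ∀ j : Fin m, eLpNorm (b j) q volume ≠ ⊤ := fun j => (hb j).2.ne
  have hRfin : (ENNReal.ofReal Mr) ^ (1/p) * ∏ j : Fin m, eLpNorm (b j) q volume ≠ ⊤ := by
    apply ENNReal.mul_ne_top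
    · exact ENNReal.rpow_ne_top_of_nonneg (by positivity) ENNReal.ofReal_ne_top
    · exact ENNReal.prod_ne_top fun j _ => hbfin j
  -- assemble ℝ≥0∞ bound
  have main_bound : ∫⁻ ω, F (X ω) ∂μ
      ≤ (ENNReal.ofReal Mr) ^ (1/p) * ∏ j : Fin m, eLpNorm (b j) q volume := by
    rw [step_map]
    refine step_holder.trans ?_
    have h1 : (∫⁻ x, F x ^ p ∂(Measure.map X μ)) ^ (1/p)
        ≤ (ENNReal.ofReal Mr * ∏ j : Fin m, (eLpNorm (b j) q volume) ^ p) ^ (1/p) := by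
      apply ENNReal.rpow_le_rpow _ (by positivity)
      refine step_dens.trans ?_
      rw [step_prod]
      apply le_of_eq
      congr 1
      exact Finset.prod_congr rfl fun j _ => step_norm j
    refine h1.trans (le_of_eq ?_)
    rw [ENNReal.mul_rpow_of_nonneg _ _ (by positivity)]
    congr 1
    rw [← ENNReal.prod_rpow_of_nonneg (by positivity : (0:ℝ) ≤ 1/p)]
    refine Finset.prod_congr rfl fun j _ => ?_
    rw [← ENNReal.rpow_mul, mul_one_div, div_self (ne_of_gt p0), ENNReal.rpow_one]
  -- from Bochner integral to lintegral
  have habs : |∫ ω, ∏ j : Fin m, b j (B (s j) ω) ∂μ| ≤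
      ((ENNReal.ofReal Mr) ^ (1/p) * ∏ j : Fin m, eLpNorm (b j) q volume).toReal := by
    have h1 : ∫ ω, ∏ j : Fin m, b j (B (s j) ω) ∂μ
        = ∫ ω, ∏ j : Fin m, g j (B (s j) ω) ∂μ := integral_congr_ae hae_eq
    rw [h1, ← Real.norm_eq_abs]
    refine (norm_integral_le_lintegral_norm _).trans ?_
    have h2 : ∀ ω, ENNReal.ofReal ‖∏ j : Fin m, g j (B (s j) ω)‖ = F (X ω) := by
      intro ω
      rw [ofReal_norm, enorm_eq_nnnorm, nnnorm_prod Finset.univ _]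
      rw [hF]
      push_cast
      exact Finset.prod_congr rfl fun j _ => by rw [hBX' ω j]
    calc (∫⁻ ω, ENNReal.ofReal ‖∏ j : Fin m, g j (B (s j) ω)‖ ∂μ).toReal
        = (∫⁻ ω, F (X ω) ∂μ).toReal := by
          congr 1
          exact lintegral_congr fun ω => h2 ω
      _ ≤ ((ENNReal.ofReal Mr) ^ (1/p) * ∏ j : Fin m, eLpNorm (b j) q volume).toReal :=
          ENNReal.toReal_mono hRfin main_bound
  refine habs.trans (le_of_eq ?_)
  -- compute the real number
  rw [ENNReal.toReal_mul, ENNReal.toReal_prod]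
  rw [← ENNReal.toReal_rpow, ENNReal.toReal_ofReal hMr0.le]
  have hMrpow : Mr ^ (1/p)
      = Cb ^ (1/p) * ∏ j : Fin m, (s j - prevTime s j) ^ (-(H * d) / p) := by
    rw [hMrdef, Real.mul_rpow hCb.le (Finset.prod_nonneg fun j _ =>
      (Real.rpow_pos_of_pos (hΔ j) _).le)]
    congr 1
    rw [← Real.finset_prod_rpow _ _ (fun j _ => (Real.rpow_pos_of_pos (hΔ j) _).le)]
    refine Finset.prod_congr rfl fun j _ => ?_
    rw [← Real.rpow_mul (hΔ j).le]
    congr 1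
    ring
  rw [hMrpow]
  rw [mul_assoc, ← Finset.prod_mul_distrib]
  congr 1
  exact Finset.prod_congr rfl fun j _ => mul_comm _ _
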